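/- If two tuples of vectors (v_1,...,v_n) and (w_1,...,w_n) in an indefinite inner product space (ℝ^d, η) have identical Gram matrices ⟨v_k, v_l⟩ = ⟨w_k, w_l⟩ for all k, l, and both span ℝ^d, then there exists O ∈ G_η(d) with O v_k = w_k for all k. -/

import Mathlib

open Matrix

/-- Tuples of spanning vectors with identical Gram matrices (w.r.t. the indefinite
inner product given by `η`) are related by an isometry in `G_η(d)`. -/
theorem exists_Geta_of_gram_eq {d n : ℕ}
    (η : Matrix (Fin d) (Fin d) ℝ)
    (f : Fin d → ℝ) (hη : η = Matrix.diagonal f) (hf : ∀ i, f i = 1 ∨ f i = -1)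
    (v w : Fin n → (Fin d → ℝ))
    (hgram : ∀ k l : Fin n, v k ⬝ᵥ η.mulVec (v l) = w k ⬝ᵥ η.mulVec (w l))
    (hv : Submodule.span ℝ (Set.range v) = ⊤)
    (hw : Submodule.span ℝ (Set.range w) = ⊤) :
    ∃ O : Matrix (Fin d) (Fin d) ℝ, Oᵀ * η * O = η ∧ ∀ k, O.mulVec (v k) = w k := by
  classical
  set φ : (Fin d → ℝ) →ₗ[ℝ] (Fin d → ℝ) →ₗ[ℝ] ℝ := Matrix.toLinearMap₂' ℝ η with hφ
  have hφ_apply : ∀ x y, φ x y = x ⬝ᵥ η *ᵥ y := fun x y =>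
    Matrix.toLinearMap₂'_apply' η x y
  -- nondegeneracy
  have hnd : ∀ u : Fin d → ℝ, (∀ y, φ u y = 0) → u = 0 := by
    intro u hu
    funext i
    have := hu (Pi.single i 1)
    rw [hφ_apply, hη] at this
    have hmv : (Matrix.diagonal f) *ᵥ (Pi.single i 1) = Pi.single i (f i) := by
      funext j
      simp [Matrix.mulVec_diagonal, Pi.single_apply]
      split <;> simp_all
    rw [hmv, dotProduct_single] at this
    rcases hf i with h | h <;> simp [h] at this <;> simp [this]
  set V : (Fin n → ℝ) →ₗ[ℝ] (Fin d → ℝ) := Fintype.linearCombination ℝ v with hV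
  set W : (Fin n → ℝ) →ₗ[ℝ] (Fin d → ℝ) := Fintype.linearCombination ℝ w with hW
  have hVsurj : Function.Surjective V := by
    rw [← LinearMap.range_eq_top, hV, Fintype.range_linearCombination, hv]
  -- key bilinear relation on linear combinations
  have hbil : ∀ c c' : Fin n → ℝ, φ (W c) (W c') = φ (V c) (V c') := by
    intro c c'
    rw [hV, hW, Fintype.linearCombination_apply, Fintype.linearCombination_apply,
      Fintype.linearCombination_apply, Fintype.linearCombination_apply]
    simp only [map_sum, _root_.map_smul, LinearMap.sum_apply, LinearMap.smul_apply,
      smul_eq_mul, hφ_apply, hgram]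
  have hker : LinearMap.ker V ≤ LinearMap.ker W := by
    intro c hc
    rw [LinearMap.mem_ker] at hc ⊢
    apply hnd
    have h1 : ∀ x ∈ Set.range w, φ (W c) x = 0 := by
      rintro _ ⟨l, rfl⟩
      have : w l = W (Pi.single l 1) := by
        rw [hW, Fintype.linearCombination_apply_single, one_smul]
      rw [this, hbil, hc, map_zero, LinearMap.zero_apply]
    intro y
    have hy : y ∈ Submodule.span ℝ (Set.range w) := by rw [hw]; trivial
    induction hy using Submodule.span_induction with
    | mem x hx => exact h1 x hx
    | zero => simp
    | add x y _ _ hx hy => rw [map_add, hx, hy, add_zero]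
    | smul a x _ hx => rw [_root_.map_smul, hx, smul_zero]
  -- construct T with T ∘ V = W
  let e := LinearMap.quotKerEquivOfSurjective V hVsurj
  let T : (Fin d → ℝ) →ₗ[ℝ] (Fin d → ℝ) :=
    ((LinearMap.ker V).liftQ W hker).comp (e.symm : (Fin d → ℝ) →ₗ[ℝ] _)
  have hTV : ∀ c, T (V c) = W c := by
    intro c
    have he : e ((LinearMap.ker V).mkQ c) = V c := rfl
    have : e.symm (V c) = (LinearMap.ker V).mkQ c := by
      rw [← he, LinearEquiv.symm_apply_apply]
    simp only [T, LinearMap.comp_apply, LinearEquiv.coe_coe, this]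
    exact Submodule.liftQ_apply _ _ _
  have hTv : ∀ k, T (v k) = w k := by
    intro k
    have hvk : v k = V (Pi.single k 1) := by
      rw [hV, Fintype.linearCombination_apply_single, one_smul]
    have hwk : w k = W (Pi.single k 1) := by
      rw [hW, Fintype.linearCombination_apply_single, one_smul]
    rw [hvk, hwk, hTV]
  -- isometry property
  have hiso : φ.compl₁₂ T T = φ := by
    apply LinearMap.ext_on hv
    intro x hx
    apply LinearMap.ext_on hv
    intro y hy
    obtain ⟨k, rfl⟩ := hx
    obtain ⟨l, rfl⟩ := hy
    rw [LinearMap.compl₁₂_apply, hTv, hTv, hφ_apply, hφ_apply, hgram]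
  refine ⟨LinearMap.toMatrix' T, ?_, ?_⟩
  · have h1 : LinearMap.toMatrix₂' ℝ (φ.compl₁₂ T T) =
        (LinearMap.toMatrix' T)ᵀ * LinearMap.toMatrix₂' ℝ φ * LinearMap.toMatrix' T := by
      exact LinearMap.toMatrix₂'_compl₁₂ φ T T
    have h2 : LinearMap.toMatrix₂' ℝ φ = η := by
      rw [hφ]
      exact (LinearMap.toMatrix₂' ℝ).apply_symm_apply η
    rw [hiso, h2] at h1
    exact h1.symm
  · intro k
    rw [← Matrix.toLin'_apply, Matrix.toLin'_toMatrix', hTv]
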